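/- Let α be an infinite cardinal, let T be an α-regular tree, and let (A_j)_{j∈J} be a family of trees each of order α, with |J| = α. Then the disjoint union ⋃_{j∈J} A_j is isomorphic to a spanning forest of T. -/

import Mathlib

open Cardinal Set

universe u

namespace Stmt3Aux


abbrev K (α : Cardinal.{u}) : Type u := α.ord.ToType

variable {α : Cardinal.{u}} {W : Type u}



lemma mk_K (α : Cardinal.{u}) : #(K α) = α := mk_ord_toType α

lemma nonempty_K (hα : ℵ₀ ≤ α) : Nonempty (K α) :=
  mk_ne_zero_iff.mp (by rw [mk_K]; exact (aleph0_pos.trans_le hα).ne')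

lemma mk_Iic_K (hα : ℵ₀ ≤ α) (x : K α) : #(Iic x) < α := by
  have h : (Iic x) = insert x (Iio x) := by
    ext y; simp [le_iff_lt_or_eq, or_comm]
  rw [h]
  calc #(insert x (Iio x) : Set (K α)) ≤ #(Iio x) + 1 := mk_insert_le
    _ < α := add_lt_of_lt hα (mk_Iio_ord_toType x) (one_lt_aleph0.trans_le hα)

lemma exists_adj_of_cut (G : SimpleGraph W) (hG : G.Preconnected)
    {S : Set W} (hS : S.Nonempty) (hS' : Sᶜ.Nonempty) :
    ∃ a ∈ S, ∃ b ∉ S, G.Adj a b := by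
  obtain ⟨s, hs⟩ := hS
  obtain ⟨t, ht⟩ := hS'
  obtain ⟨w⟩ := hG s t
  clear hG
  induction w with
  | nil => exact absurd hs ht
  | @cons u v c h p ih =>
    by_cases hv : v ∈ S
    · exact ih hv ht
    · exact ⟨u, hs, v, hv, h⟩

section Attach

variable (G : SimpleGraph W) (eq0 : W ≃ K α)

/-- The candidate set for the greedy construction of an attachment enumeration:
indices of vertices not yet used which are adjacent to the used set (or anything, if
nothing is used yet). -/
def aCand (S : Set W) : Set (K α) :=
  {z : K α | eq0.symm z ∉ S ∧ (¬ S.Nonempty ∨ ∃ w ∈ S, G.Adj w (eq0.symm z))}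

noncomputable def aNext (S : Set W) (h : (aCand G eq0 S).Nonempty) : W :=
  eq0.symm (wellFounded_lt.min _ h)

lemma aNext_not_mem {S : Set W} (h : (aCand G eq0 S).Nonempty) : aNext G eq0 S h ∉ S :=
  (wellFounded_lt.min_mem _ h).1

lemma aNext_adj {S : Set W} (h : (aCand G eq0 S).Nonempty) (hS : S.Nonempty) :
    ∃ w ∈ S, G.Adj w (aNext G eq0 S h) := by
  have := (wellFounded_lt.min_mem _ h).2
  tauto

lemma aNext_le {S : Set W} (h : (aCand G eq0 S).Nonempty) {z : K α} (hz : z ∈ aCand G eq0 S) :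
    eq0 (aNext G eq0 S h) ≤ z := by
  have := wellFounded_lt.not_lt_min _ hz
  simpa [aNext] using not_lt.mp this

lemma aCand_nonempty (hα : ℵ₀ ≤ α) (hW : #W = α) (hG : G.Preconnected)
    {S : Set W} (hS : #S < α) : (aCand G eq0 S).Nonempty := by
  have hne : Sᶜ.Nonempty := by
    rw [Set.nonempty_compl]
    rintro rfl
    rw [mk_univ, hW] at hS
    exact lt_irrefl _ hS
  by_cases h0 : S.Nonempty
  · obtain ⟨a, ha, b, hb, hab⟩ := exists_adj_of_cut G hG h0 hne
    exact ⟨eq0 b, by simp [aCand, hb], Or.inr ⟨a, ha, by simpa using hab⟩⟩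
  · obtain ⟨b, hb⟩ := hne
    exact ⟨eq0 b, by simpa [aCand, h0] using hb, Or.inl h0⟩

lemma mk_range_Iio_lt (x : K α) (f : Iio x → W) : #(range f) < α :=
  mk_range_le.trans_lt (mk_Iio_ord_toType x)

variable (hα : ℵ₀ ≤ α) (hW : #W = α) (hG : G.Preconnected)

noncomputable def aBody (x : K α) (IH : ∀ y, y < x → W) : W :=
  aNext G eq0 (range fun y : Iio x => IH y y.2)
    (aCand_nonempty G eq0 hα hW hG (mk_range_le.trans_lt (mk_Iio_ord_toType x)))

noncomputable def aF : K α → W :=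
  wellFounded_lt.fix (aBody G eq0 hα hW hG)

lemma aF_eq (x : K α) :
    aF G eq0 hα hW hG x
      = aNext G eq0 (range fun y : Iio x => aF G eq0 hα hW hG y)
        (aCand_nonempty G eq0 hα hW hG (mk_range_le.trans_lt (mk_Iio_ord_toType x))) := by
  rw [aF, WellFounded.fix_eq]
  rfl


lemma aF_image (x : K α) :
    (range fun y : Iio x => aF G eq0 hα hW hG y) = aF G eq0 hα hW hG '' (Iio x) := by
  ext w
  constructor
  · rintro ⟨⟨y, hy⟩, rfl⟩; exact ⟨y, hy, rfl⟩
  · rintro ⟨y, hy, rfl⟩; exact ⟨⟨y, hy⟩, rfl⟩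

lemma aF_not_mem (x : K α) :
    aF G eq0 hα hW hG x ∉ aF G eq0 hα hW hG '' (Iio x) := by
  rw [← aF_image, aF_eq]
  exact aNext_not_mem _ _ _

lemma aF_injective : Function.Injective (aF G eq0 hα hW hG) := by
  intro x y hxy
  by_contra hne
  rcases lt_trichotomy x y with h | h | h
  · exact aF_not_mem G eq0 hα hW hG y ⟨x, h, hxy⟩
  · exact hne h
  · exact aF_not_mem G eq0 hα hW hG x ⟨y, h, hxy.symm⟩

lemma aF_attach (x : K α) (hx : ∃ y, y < x) :
    ∃ y, y < x ∧ G.Adj (aF G eq0 hα hW hG y) (aF G eq0 hα hW hG x) := by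
  obtain ⟨y0, hy0⟩ := hx
  have hne : ((range fun y : Iio x => aF G eq0 hα hW hG y)).Nonempty := ⟨_, ⟨⟨y0, hy0⟩, rfl⟩⟩
  have h := aNext_adj G eq0
    (aCand_nonempty G eq0 hα hW hG (mk_range_le.trans_lt (mk_Iio_ord_toType x))) hne
  rw [← aF_eq] at h
  obtain ⟨w, ⟨⟨y, hy⟩, rfl⟩, hadj⟩ := h
  exact ⟨y, hy, hadj⟩

lemma aF_min (x : K α) {z : K α}
    (hz : z ∈ aCand G eq0 (aF G eq0 hα hW hG '' (Iio x))) :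
    eq0 (aF G eq0 hα hW hG x) ≤ z := by
  rw [← aF_image] at hz
  rw [aF_eq]
  exact aNext_le G eq0 _ hz

lemma mk_Ioi_K (hα' : ℵ₀ ≤ α) (t : K α) : #(Ioi t) = α := by
  refine le_antisymm (mk_set_le _ |>.trans (le_of_eq (mk_ord_toType α))) ?_
  by_contra hlt
  push_neg at hlt
  have h1 : #(Iic t) < α := mk_Iic_K hα' t
  have : (univ : Set (K α)) = Iic t ∪ Ioi t := by
    ext y; simp [le_or_gt]
  have h2 : α ≤ #(Iic t) + #(Ioi t) := by
    calc α = #(univ : Set (K α)) := by rw [mk_univ, mk_ord_toType]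
      _ = #(Iic t ∪ Ioi t : Set (K α)) := by rw [← this]
      _ ≤ #(Iic t) + #(Ioi t) := mk_union_le _ _
  exact absurd h2 (not_le.mpr (add_lt_of_lt hα' h1 hlt))

lemma aF_surjective (hα2 : ℵ₀ ≤ α) : Function.Surjective (aF G eq0 hα hW hG) := by
  -- first, a step lemma
  have step : ∀ u u' : W, u ∈ range (aF G eq0 hα hW hG) → G.Adj u u' →
      u' ∈ range (aF G eq0 hα hW hG) := by
    intro u u' hu hadj
    by_contra hu'
    obtain ⟨t, rfl⟩ := hu
    have key : ∀ x : Ioi t, eq0 (aF G eq0 hα hW hG x) ≤ eq0 u' := by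
      rintro ⟨x, hx⟩
      apply aF_min
      constructor
      · simp only [Equiv.symm_apply_apply]
        rintro ⟨y, _, hy⟩
        exact hu' ⟨y, hy⟩
      · refine Or.inr ⟨aF G eq0 hα hW hG t, ⟨t, hx, rfl⟩, ?_⟩
        simpa using hadj
    have hinj : Function.Injective
        (fun x : Ioi t => (⟨eq0 (aF G eq0 hα hW hG x), key x⟩ : Iic (eq0 u'))) := by
      intro a b hab
      simp only [Subtype.ext_iff, EmbeddingLike.apply_eq_iff_eq] at hab
      exact Subtype.ext (aF_injective G eq0 hα hW hG hab)
    have := mk_le_of_injective hinj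
    rw [mk_Ioi_K hα2 t] at this
    exact absurd this (not_le.mpr (mk_Iic_K hα2 _))
  intro u
  -- walk from the image of any point
  have ⟨x0⟩ : Nonempty (K α) := nonempty_K hα2
  have h0 : aF G eq0 hα hW hG x0 ∈ range (aF G eq0 hα hW hG) := ⟨x0, rfl⟩
  obtain ⟨w⟩ := hG (aF G eq0 hα hW hG x0) u
  clear h0
  have : ∀ {a b : W} (_ : G.Walk a b), a ∈ range (aF G eq0 hα hW hG) →
      b ∈ range (aF G eq0 hα hW hG) := by
    intro a b w
    induction w with
    | nil => exact id
    | @cons p q r h pw ih => exact fun ha => ih (step _ _ ha h)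
  exact this w ⟨x0, rfl⟩

/-- Main attachment enumeration existence lemma. -/
lemma exists_attach (hα' : ℵ₀ ≤ α) (hG' : G.Connected) (hW' : #W = α) :
    ∃ e : K α ≃ W, ∀ x : K α, (∃ y, y < x) → ∃ y, y < x ∧ G.Adj (e y) (e x) := by
  obtain ⟨eqW⟩ := Cardinal.eq.mp (hW'.trans (mk_ord_toType α).symm)
  refine ⟨Equiv.ofBijective (aF G eqW hα' hW' hG'.preconnected)
    ⟨aF_injective _ _ _ _ _, aF_surjective _ _ _ _ _ hα'⟩, ?_⟩
  intro x hx
  exact aF_attach G eqW hα' hW' hG'.preconnected x hx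

end Attach






variable {α : Cardinal.{u}}

section Parent

variable {W : Type u} (G : SimpleGraph W) (e : K α ≃ W)
  (hatt : ∀ x : K α, (∃ y, y < x) → ∃ y, y < x ∧ G.Adj (e y) (e x))
  {m : K α} (hm : ∀ y : K α, ¬ y < m)

include hatt hm in
lemma walk_to_root (x : K α) :
    ∃ w : G.Walk (e m) (e x), ∀ u ∈ w.support, ∃ y, y ≤ x ∧ e y = u := by
  induction x using WellFoundedLT.induction with
  | ind x IH =>
    by_cases hx : ∃ y, y < x
    · obtain ⟨y, hy, hadj⟩ := hatt x hx
      obtain ⟨w, hw⟩ := IH y hy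
      refine ⟨w.concat hadj, ?_⟩
      intro u hu
      rw [SimpleGraph.Walk.support_concat, List.mem_append] at hu
      rcases hu with hu | hu
      · obtain ⟨y', hy', rfl⟩ := hw u hu
        exact ⟨y', le_trans hy' hy.le, rfl⟩
      · rw [List.mem_singleton] at hu
        exact ⟨x, le_rfl, hu.symm⟩
    · push_neg at hx
      have hxm : x = m := le_antisymm (hx m) (not_lt.mp (hm x))
      subst hxm
      refine ⟨SimpleGraph.Walk.nil, ?_⟩
      intro u hu
      rw [SimpleGraph.Walk.support_nil, List.mem_singleton] at hu
      exact ⟨x, le_rfl, hu.symm⟩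

include hatt hm in
lemma parent_unique (hGa : G.IsAcyclic) {x y₁ y₂ : K α}
    (h1 : y₁ < x) (h2 : y₂ < x)
    (a1 : G.Adj (e y₁) (e x)) (a2 : G.Adj (e y₂) (e x)) : y₁ = y₂ := by
  classical
  by_contra hne
  obtain ⟨w₁, hw₁⟩ := walk_to_root G e hatt hm y₁
  obtain ⟨w₂, hw₂⟩ := walk_to_root G e hatt hm y₂
  set q0 : G.Walk (e y₁) (e y₂) := w₁.reverse.append w₂ with hq0
  set q := q0.bypass with hq
  have hqp : q.IsPath := SimpleGraph.Walk.bypass_isPath q0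
  have hxq : e x ∉ q.support := by
    intro hmem
    have hmem0 : e x ∈ q0.support := SimpleGraph.Walk.support_bypass_subset q0 hmem
    rw [hq0, SimpleGraph.Walk.mem_support_append_iff] at hmem0
    rcases hmem0 with h | h
    · rw [SimpleGraph.Walk.support_reverse, List.mem_reverse] at h
      obtain ⟨y, hy, hy'⟩ := hw₁ _ h
      have : y = x := e.injective hy'
      subst this
      exact absurd hy (not_le.mpr h1)
    · obtain ⟨y, hy, hy'⟩ := hw₂ _ h
      have : y = x := e.injective hy'
      subst this
      exact absurd hy (not_le.mpr h2)
  -- build the second path from e y₁ to e x through e y₂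
  have hxqr : e x ∉ q.reverse.support := by
    rw [SimpleGraph.Walk.support_reverse, List.mem_reverse]; exact hxq
  have hp₂ : ((SimpleGraph.Walk.cons a2.symm q.reverse).reverse).IsPath :=
    (hqp.reverse.cons hxqr).reverse
  have hkey := hGa.path_unique (SimpleGraph.Path.singleton a1)
    ⟨(SimpleGraph.Walk.cons a2.symm q.reverse).reverse, hp₂⟩
  have hsupp := congrArg (fun p : G.Path (e y₁) (e x) => (p : G.Walk (e y₁) (e x)).support) hkey
  simp only [SimpleGraph.Path.singleton] at hsupp
  have hy₂mem : e y₂ ∈ ((SimpleGraph.Walk.cons a2.symm q.reverse).reverse).support := by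
    rw [SimpleGraph.Walk.support_reverse, List.mem_reverse,
      SimpleGraph.Walk.support_cons]
    right
    exact SimpleGraph.Walk.start_mem_support _
  rw [← hsupp] at hy₂mem
  rw [SimpleGraph.Walk.support_cons, SimpleGraph.Walk.support_nil] at hy₂mem
  simp only [List.mem_cons, List.mem_singleton] at hy₂mem
  rcases hy₂mem with h | h | h
  · exact hne (e.injective h).symm
  · exact absurd (e.injective h) h2.ne
  · simp at h

end Parent

section CardV

variable {V : Type u}

noncomputable def decode (T : SimpleGraph V) (nbE : ∀ x : V, K α ≃ T.neighborSet x) :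
    V → List (K α) → V
  | x, [] => x
  | x, a :: l => decode T nbE ((nbE x a : T.neighborSet x) : V) l

lemma decode_surj (T : SimpleGraph V) (nbE : ∀ x : V, K α ≃ T.neighborSet x)
    {x u : V} (h : T.Reachable x u) : ∃ l, decode T nbE x l = u := by
  obtain ⟨w⟩ := h
  induction w with
  | nil => exact ⟨[], rfl⟩
  | @cons a b c hadj p ih =>
    obtain ⟨l, hl⟩ := ih
    refine ⟨(nbE a).symm ⟨b, hadj⟩ :: l, ?_⟩
    rw [decode]
    simp only [Equiv.apply_symm_apply]
    exact hl

lemma card_V (hα : ℵ₀ ≤ α) (T : SimpleGraph V) (hTc : T.Connected)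
    (hreg : ∀ v : V, #(T.neighborSet v) = α) : #V = α := by
  have hne : Nonempty V := hTc.nonempty
  obtain ⟨v0⟩ := hne
  have hKa : #(K α) = α := mk_ord_toType α
  have hKne : Nonempty (K α) := mk_ne_zero_iff.mp (by rw [hKa]; exact (aleph0_pos.trans_le hα).ne')
  have nbE : ∀ x : V, K α ≃ T.neighborSet x := by
    intro x
    exact (Cardinal.eq.mp (hKa.trans (hreg x).symm)).some
  refine le_antisymm ?_ ?_
  · have hsurj : Function.Surjective (decode T nbE v0) := by
      intro u
      exact decode_surj T nbE (hTc.preconnected v0 u)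
    calc #V ≤ #(List (K α)) := mk_le_of_surjective hsurj
      _ = max #(K α) ℵ₀ := mk_list_eq_max_mk_aleph0 _
      _ = α := by rw [hKa, max_eq_left hα]
  · calc α = #(T.neighborSet v0) := (hreg v0).symm
      _ ≤ #V := mk_le_of_injective Subtype.val_injective

end CardV





variable {α : Cardinal.{u}}

section MainRec

noncomputable def phi (p : K α × K α) : (K α) ×ₗ ((K α) ×ₗ (K α)) :=
  toLex (max p.1 p.2, toLex (p.1, p.2))

def Rr (p q : K α × K α) : Prop := phi p < phi q

lemma Rr_wf : WellFounded (@Rr α) := InvImage.wf phi wellFounded_lt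

lemma phi_injective : Function.Injective (@phi α) := by
  intro p q h
  have h2 := congrArg (fun z => (ofLex z).2) h
  simp only [phi, ofLex_toLex] at h2
  have := toLex.injective h2
  exact Prod.ext (congrArg Prod.fst this) (congrArg Prod.snd this)

lemma Rr_trichotomy (p q : K α × K α) (h : p ≠ q) : Rr p q ∨ Rr q p := by
  rcases lt_trichotomy (phi p) (phi q) with h1 | h1 | h1
  · exact Or.inl h1
  · exact absurd (phi_injective h1) h
  · exact Or.inr h1

lemma Rr_snd_lt {j x y : K α} (h : x < y) : Rr (j, x) (j, y) := by
  show phi _ < phi _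
  rw [phi, phi, Prod.Lex.lt_iff]
  rcases lt_or_eq_of_le (max_le_max (le_refl j) h.le) with h1 | h1
  · exact Or.inl h1
  · refine Or.inr ⟨h1, ?_⟩
    rw [Prod.Lex.lt_iff]
    exact Or.inr ⟨rfl, h⟩

lemma max_le_of_Rr {p q : K α × K α} (h : Rr q p) :
    max q.1 q.2 ≤ max p.1 p.2 := by
  rw [Rr, phi, phi, Prod.Lex.lt_iff] at h
  rcases h with h | h
  · exact le_of_lt h
  · exact le_of_eq h.1

lemma mk_Iic_K' (hα : ℵ₀ ≤ α) (x : K α) : #(Iic x) < α := by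
  have h : (Iic x) = insert x (Iio x) := by
    ext y; simp [le_iff_lt_or_eq, or_comm]
  rw [h]
  calc #(insert x (Iio x) : Set (K α)) ≤ #(Iio x) + 1 := mk_insert_le
    _ < α := add_lt_of_lt hα (mk_Iio_ord_toType x) (one_lt_aleph0.trans_le hα)

lemma mk_Rr_lt (hα : ℵ₀ ≤ α) (p : K α × K α) : #{q | Rr q p} < α := by
  set z := max p.1 p.2 with hz
  have hmem : ∀ q ∈ {q | Rr q p}, q.1 ≤ z ∧ q.2 ≤ z := by
    intro q hq
    have := max_le_of_Rr hq
    exact ⟨le_trans (le_max_left _ _) this, le_trans (le_max_right _ _) this⟩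
  have hinj : Function.Injective (fun q : {q | Rr q p} =>
      ((⟨q.1.1, (hmem q q.2).1⟩, ⟨q.1.2, (hmem q q.2).2⟩) : Iic z × Iic z)) := by
    intro a b hab
    simp only [Prod.mk.injEq, Subtype.ext_iff] at hab
    exact Subtype.ext (Prod.ext hab.1 hab.2)
  have := mk_le_of_injective hinj
  refine lt_of_le_of_lt this ?_
  have : #(↑(Iic z) × ↑(Iic z)) = #(Iic z) * #(Iic z) := by
    simp [mk_prod]
  rw [this]
  exact mul_lt_of_lt hα (mk_Iic_K' hα z) (mk_Iic_K' hα z)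

end MainRec

section MainF

variable {V J : Type u} {W : J → Type u}

noncomputable def par {A : ∀ j, SimpleGraph (W j)} {e : ∀ j, K α ≃ W j}
    (hatt : ∀ j (x : K α), (∃ y, y < x) → ∃ y, y < x ∧ (A j).Adj (e j y) (e j x))
    (j : J) (x : K α) (hx : ∃ y, y < x) : K α := (hatt j x hx).choose

lemma par_lt {A : ∀ j, SimpleGraph (W j)} {e : ∀ j, K α ≃ W j}
    (hatt : ∀ j (x : K α), (∃ y, y < x) → ∃ y, y < x ∧ (A j).Adj (e j y) (e j x))
    (j : J) (x : K α) (hx : ∃ y, y < x) : par hatt j x hx < x :=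
  (hatt j x hx).choose_spec.1

lemma par_adj {A : ∀ j, SimpleGraph (W j)} {e : ∀ j, K α ≃ W j}
    (hatt : ∀ j (x : K α), (∃ y, y < x) → ∃ y, y < x ∧ (A j).Adj (e j y) (e j x))
    (j : J) (x : K α) (hx : ∃ y, y < x) :
    (A j).Adj (e j (par hatt j x hx)) (e j x) :=
  (hatt j x hx).choose_spec.2

lemma mk_prev_lt (hα : ℵ₀ ≤ α) (p : K α × K α) (IH : ∀ q, Rr q p → V) :
    #(range fun q : {q // Rr q p} => IH q.1 q.2) < α :=
  mk_range_le.trans_lt (mk_Rr_lt hα p)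

lemma root_cand_nonempty (eV : V ≃ K α) {prev : Set V} (hprev : #prev < α) :
    {z : K α | eV.symm z ∉ prev}.Nonempty := by
  by_contra h
  rw [Set.not_nonempty_iff_eq_empty] at h
  have hall : ∀ z : K α, eV.symm z ∈ prev := by
    intro z
    by_contra hz
    exact notMem_empty z (h ▸ (hz : z ∈ {z : K α | eV.symm z ∉ prev}))
  have hsub : (univ : Set V) ⊆ prev := fun v _ => by simpa using hall (eV v)
  have h2 : α ≤ #prev := by
    calc α = #(K α) := (mk_ord_toType α).symm
      _ = #V := (Cardinal.mk_congr eV).symm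
      _ = #(univ : Set V) := mk_univ.symm
      _ ≤ #prev := mk_le_mk_of_subset hsub
  exact absurd h2 (not_le.mpr hprev)

lemma nb_nonempty (T : SimpleGraph V) (hreg : ∀ v : V, #(T.neighborSet v) = α)
    (v : V) {prev : Set V} (hprev : #prev < α) :
    (T.neighborSet v \ prev).Nonempty := by
  by_contra h
  rw [Set.not_nonempty_iff_eq_empty, Set.diff_eq_empty] at h
  have : α ≤ #prev := (hreg v).symm.trans_le (mk_le_mk_of_subset h)
  exact absurd this (not_le.mpr hprev)

variable (T : SimpleGraph V) {A : ∀ j, SimpleGraph (W j)}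
  (eJ : J ≃ K α) (eV : V ≃ K α) {e : ∀ j, K α ≃ W j}

open scoped Classical in
noncomputable def mBody
    (hatt : ∀ j (x : K α), (∃ y, y < x) → ∃ y, y < x ∧ (A j).Adj (e j y) (e j x))
    (hα : ℵ₀ ≤ α) (hreg : ∀ v : V, #(T.neighborSet v) = α)
    (p : K α × K α) (IH : ∀ q, Rr q p → V) : V :=
  if hx : ∃ y, y < p.2 then
    (nb_nonempty T hreg
      (IH (p.1, par hatt (eJ.symm p.1) p.2 hx)
        (Rr_snd_lt (par_lt hatt (eJ.symm p.1) p.2 hx)))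
      (mk_prev_lt hα p IH)).some
  else
    eV.symm (wellFounded_lt.min {z : K α | eV.symm z ∉ range fun q : {q // Rr q p} => IH q.1 q.2}
      (root_cand_nonempty eV (mk_prev_lt hα p IH)))

variable (hatt : ∀ j (x : K α), (∃ y, y < x) → ∃ y, y < x ∧ (A j).Adj (e j y) (e j x))
  (hα : ℵ₀ ≤ α) (hreg : ∀ v : V, #(T.neighborSet v) = α)

noncomputable def mF : K α × K α → V := Rr_wf.fix (mBody T eJ eV hatt hα hreg)

lemma mF_eq (p : K α × K α) :
    mF T eJ eV hatt hα hreg p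
      = mBody T eJ eV hatt hα hreg p (fun q _ => mF T eJ eV hatt hα hreg q) := by
  rw [mF, WellFounded.fix_eq]

/-- The set of values used before stage `p`. -/
def mPrev (p : K α × K α) : Set V :=
  range fun q : {q // Rr q p} => mF T eJ eV hatt hα hreg q.1

lemma mF_not_mem (p : K α × K α) :
    mF T eJ eV hatt hα hreg p ∉ mPrev T eJ eV hatt hα hreg p := by
  rw [mPrev, mF_eq, mBody]
  split_ifs with hx
  · exact ((nb_nonempty T hreg _ (mk_prev_lt hα p (fun q _ => mF T eJ eV hatt hα hreg q))).some_mem).2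
  · exact (wellFounded_lt.min_mem
      {z : K α | eV.symm z ∉ range fun q : {q // Rr q p} => mF T eJ eV hatt hα hreg q.1}
      (root_cand_nonempty eV (mk_prev_lt hα p (fun q _ => mF T eJ eV hatt hα hreg q))))

lemma mF_injective : Function.Injective (mF T eJ eV hatt hα hreg) := by
  intro p q hpq
  by_contra hne
  rcases Rr_trichotomy p q hne with h | h
  · exact mF_not_mem T eJ eV hatt hα hreg q ⟨⟨p, h⟩, hpq⟩
  · exact mF_not_mem T eJ eV hatt hα hreg p ⟨⟨q, h⟩, hpq.symm⟩

lemma mF_adj (p : K α × K α) (hx : ∃ y, y < p.2) :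
    T.Adj (mF T eJ eV hatt hα hreg (p.1, par hatt (eJ.symm p.1) p.2 hx))
      (mF T eJ eV hatt hα hreg p) := by
  conv_rhs => rw [mF_eq, mBody]
  rw [dif_pos hx]
  exact ((nb_nonempty T hreg (mF T eJ eV hatt hα hreg (p.1, par hatt (eJ.symm p.1) p.2 hx)) (mk_prev_lt hα p (fun q _ => mF T eJ eV hatt hα hreg q))).some_mem).1

lemma mF_root_le (p : K α × K α) (hx : ¬ ∃ y, y < p.2) {z : K α}
    (hz : eV.symm z ∉ mPrev T eJ eV hatt hα hreg p) :
    eV (mF T eJ eV hatt hα hreg p) ≤ z := by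
  rw [mF_eq, mBody, dif_neg hx]
  rw [Equiv.apply_symm_apply]
  exact not_lt.mp (wellFounded_lt.not_lt_min _ hz)

lemma mF_surjective (hmin : ∃ m : K α, ∀ y : K α, ¬ y < m) :
    Function.Surjective (mF T eJ eV hatt hα hreg) := by
  obtain ⟨m, hm⟩ := hmin
  intro v
  by_contra hv
  have hv' : ∀ p, mF T eJ eV hatt hα hreg p ≠ v := fun p h => hv ⟨p, h⟩
  have key : ∀ j : K α, eV (mF T eJ eV hatt hα hreg (j, m)) ≤ eV v := by
    intro j
    apply mF_root_le T eJ eV hatt hα hreg (j, m) (by simpa using fun y => hm y)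
    rw [Equiv.symm_apply_apply]
    rintro ⟨q, hq⟩
    exact hv' _ hq
  have hinj : Function.Injective (fun j : K α =>
      (⟨eV (mF T eJ eV hatt hα hreg (j, m)), key j⟩ : Iic (eV v))) := by
    intro a b hab
    simp only [Subtype.ext_iff, EmbeddingLike.apply_eq_iff_eq] at hab
    have := mF_injective T eJ eV hatt hα hreg hab
    exact (Prod.ext_iff.mp this).1
  have h1 := mk_le_of_injective hinj
  rw [mk_ord_toType] at h1
  exact absurd h1 (not_le.mpr (mk_Iic_K' hα _))

end MainF



lemma mF_edge {V J : Type u} {W : J → Type u} (T : SimpleGraph V)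
    {A : ∀ j, SimpleGraph (W j)} (eJ : J ≃ K α) (eV : V ≃ K α) {e : ∀ j, K α ≃ W j}
    (hatt : ∀ j (x : K α), (∃ y, y < x) → ∃ y, y < x ∧ (A j).Adj (e j y) (e j x))
    (hα : ℵ₀ ≤ α) (hreg : ∀ v : V, #(T.neighborSet v) = α)
    {m : K α} (hm : ∀ y : K α, ¬ y < m) (hAa : ∀ j, (A j).IsAcyclic)
    (c : K α) {x y : K α} (hyx : y < x)
    (hadj : (A (eJ.symm c)).Adj (e (eJ.symm c) y) (e (eJ.symm c) x)) :
    T.Adj (mF T eJ eV hatt hα hreg (c, y)) (mF T eJ eV hatt hα hreg (c, x)) := by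
  have hx : ∃ z, z < x := ⟨y, hyx⟩
  have hP := mF_adj T eJ eV hatt hα hreg (c, x) hx
  have hy : y = par hatt (eJ.symm c) x hx :=
    parent_unique (A (eJ.symm c)) (e (eJ.symm c)) (hatt (eJ.symm c)) hm (hAa _)
      hyx (par_lt hatt (eJ.symm c) x hx) hadj (par_adj hatt (eJ.symm c) x hx)
  rw [hy]
  exact hP

end Stmt3Aux

/-- The disjoint union of a family of graphs, as a graph on the sigma type. -/
def sigmaGraph {ι : Type u} {W : ι → Type u} (A : ∀ i, SimpleGraph (W i)) :
    SimpleGraph (Σ i, W i) where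
  Adj x y := ∃ (i : ι) (a b : W i), (A i).Adj a b ∧ x = ⟨i, a⟩ ∧ y = ⟨i, b⟩
  symm := by
    constructor
    rintro x y ⟨i, a, b, h, rfl, rfl⟩
    exact ⟨i, b, a, h.symm, rfl, rfl⟩
  loopless := by
    constructor
    rintro x ⟨i, a, b, h, rfl, he⟩
    rw [Sigma.mk.inj_iff] at he
    obtain ⟨-, he⟩ := he
    exact (A i).loopless.irrefl a (heq_iff_eq.mp he ▸ h)

/-- If `T` is an α-regular tree (α infinite) and `(A_j)_{j ∈ J}` is a family of trees each
of order α with `|J| = α`, then the disjoint union `⋃_j A_j` is isomorphic to a spanning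
forest of `T`. -/
theorem stmt_3 {V : Type u} {J : Type u} {W : J → Type u} (α : Cardinal.{u}) (hα : ℵ₀ ≤ α)
    (T : SimpleGraph V) (hTc : T.Connected) (hTa : T.IsAcyclic)
    (hreg : ∀ v : V, #(T.neighborSet v) = α)
    (A : ∀ j, SimpleGraph (W j))
    (hAc : ∀ j, (A j).Connected) (hAa : ∀ j, (A j).IsAcyclic)
    (horder : ∀ j, #(W j) = α) (hJ : #J = α) :
    ∃ F : SimpleGraph V, F ≤ T ∧ F.IsAcyclic ∧ Nonempty (sigmaGraph A ≃g F) := by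
  classical
  obtain ⟨eJ⟩ : Nonempty (J ≃ Stmt3Aux.K α) :=
    Cardinal.eq.mp (hJ.trans (mk_ord_toType α).symm)
  have hV : #V = α := Stmt3Aux.card_V hα T hTc hreg
  obtain ⟨eV⟩ : Nonempty (V ≃ Stmt3Aux.K α) :=
    Cardinal.eq.mp (hV.trans (mk_ord_toType α).symm)
  have hats : ∀ j, ∃ e : Stmt3Aux.K α ≃ W j,
      ∀ x, (∃ y, y < x) → ∃ y, y < x ∧ (A j).Adj (e y) (e x) :=
    fun j => Stmt3Aux.exists_attach (A j) hα (hAc j) (horder j)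
  choose e hatt using hats
  obtain ⟨x0⟩ : Nonempty (Stmt3Aux.K α) := Stmt3Aux.nonempty_K hα
  obtain ⟨m, hm⟩ : ∃ m : Stmt3Aux.K α, ∀ y, ¬ y < m :=
    ⟨wellFounded_lt.min univ ⟨x0, trivial⟩,
      fun y hy => wellFounded_lt.not_lt_min univ (mem_univ y) hy⟩
  set F0 : Stmt3Aux.K α × Stmt3Aux.K α → V := Stmt3Aux.mF T eJ eV hatt hα hreg with hF0
  have hFinj : Function.Injective F0 := Stmt3Aux.mF_injective T eJ eV hatt hα hreg
  have hFsurj : Function.Surjective F0 := Stmt3Aux.mF_surjective T eJ eV hatt hα hreg ⟨m, hm⟩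
  -- the global bijection
  set f : (Σ j, W j) → V := fun d => F0 (eJ d.1, (e d.1).symm d.2) with hf
  have hfinj : Function.Injective f := by
    rintro ⟨j1, w1⟩ ⟨j2, w2⟩ h
    have h2 := hFinj h
    rw [Prod.mk.injEq] at h2
    obtain ⟨hj, hw⟩ := h2
    have hj' : j1 = j2 := eJ.injective hj
    subst hj'
    have : w1 = w2 := by
      have := (e j1).symm.injective hw
      simpa using this
    rw [this]
  have hfsurj : Function.Surjective f := by
    intro v
    obtain ⟨p, hp⟩ := hFsurj v
    refine ⟨⟨eJ.symm p.1, e (eJ.symm p.1) p.2⟩, ?_⟩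
    rw [hf]
    simpa using hp
  set fE : (Σ j, W j) ≃ V := Equiv.ofBijective f ⟨hfinj, hfsurj⟩ with hfE
  -- edge preservation
  have hedge : ∀ (d d' : Σ j, W j), (sigmaGraph A).Adj d d' → T.Adj (f d) (f d') := by
    rintro d d' ⟨i, a, b, hab, rfl, rfl⟩
    obtain ⟨c, rfl⟩ : ∃ c, i = eJ.symm c := ⟨eJ i, (eJ.symm_apply_apply i).symm⟩
    have hfa : f ⟨eJ.symm c, a⟩ = F0 (c, (e (eJ.symm c)).symm a) := by
      rw [hf]; simp
    have hfb : f ⟨eJ.symm c, b⟩ = F0 (c, (e (eJ.symm c)).symm b) := by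
      rw [hf]; simp
    rw [hfa, hfb]
    set x := (e (eJ.symm c)).symm a with hx
    set y := (e (eJ.symm c)).symm b with hy
    have hab' : (A (eJ.symm c)).Adj (e (eJ.symm c) x) (e (eJ.symm c) y) := by
      rw [hx, hy]; simpa using hab
    have hxy : x ≠ y := by
      intro hcon
      rw [hcon] at hab'
      exact (A (eJ.symm c)).loopless.irrefl _ hab'
    rcases hxy.lt_or_gt with h | h
    · exact Stmt3Aux.mF_edge T eJ eV hatt hα hreg hm hAa c h hab'
    · exact (Stmt3Aux.mF_edge T eJ eV hatt hα hreg hm hAa c h hab'.symm).symm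
  refine ⟨(sigmaGraph A).map fE.toEmbedding, ?_, ?_, ?_⟩
  · rintro v w ⟨-, da, db, hd, rfl, rfl⟩
    exact hedge da db hd
  · intro v c hc
    exact hTa (c.mapLe (by
      rintro vv ww ⟨-, da, db, hd, rfl, rfl⟩
      exact hedge da db hd)) (hc.mapLe _)
  · refine ⟨⟨fE, ?_⟩⟩
    intro d d'
    constructor
    · rintro ⟨-, da, db, hd, ha, hb⟩
      have ha' : da = d := fE.injective ha
      have hb' : db = d' := fE.injective hb
      rw [ha', hb'] at hd
      exact hd
    · intro h
      exact ⟨fE.injective.ne h.ne, d, d', h, rfl, rfl⟩
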